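/- arXiv:2108.00676 — 2 statements merged into one kernel-verified Lean document; each statement's English description precedes it below -/
import Mathlib

section
/- Let n ≥ 1 and let a_1,…,a_n be pairwise coprime positive integers. Then the map u ↦ Σ_{i=1}^{n} u_i/a_i is injective on B': for u, v ∈ B', if Σ_{i=1}^{n} u_i/a_i = Σ_{i=1}^{n} v_i/a_i then u = v. -/
open Finset

/-- The set `B'` of lattice points `u ∈ ℤ^n` with `0 ≤ uᵢ ≤ aᵢ` for all `i` such that
there is no pair `i < j` with `uᵢ = 0` and `uⱼ = aⱼ`. -/
def setB' (n : ℕ) (a : Fin n → ℤ) : Set (Fin n → ℤ) :=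
  {u | (∀ i, 0 ≤ u i ∧ u i ≤ a i) ∧ ¬∃ i j : Fin n, i < j ∧ u i = 0 ∧ u j = a j}

theorem stmt17 (n : ℕ) (hn : 1 ≤ n) (a : Fin n → ℤ) (ha : ∀ i, 0 < a i)
    (hcop : ∀ i j : Fin n, i < j → Int.gcd (a i) (a j) = 1)
    (u v : Fin n → ℤ) (hu : u ∈ setB' n a) (hv : v ∈ setB' n a)
    (h : ∑ i, (u i : ℝ) / (a i : ℝ) = ∑ i, (v i : ℝ) / (a i : ℝ)) :
    u = v := by
  classical
  obtain ⟨hu1, hu2⟩ := hu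
  obtain ⟨hv1, hv2⟩ := hv
  set c : Fin n → ℤ := fun i => ∏ j ∈ Finset.univ.erase i, a j with hc
  have haR : ∀ i, (a i : ℝ) ≠ 0 := fun i => by exact_mod_cast (ha i).ne'
  have hPi : ∀ i, a i * c i = ∏ j, a j := fun i =>
    Finset.mul_prod_erase Finset.univ a (Finset.mem_univ i)
  have key : ∑ i, (u i - v i) * c i = 0 := by
    have hterm : ∀ i : Fin n, ((u i - v i : ℤ) : ℝ) * (c i : ℝ)
        = ((u i : ℝ) / a i - (v i : ℝ) / a i) * ∏ j, (a j : ℝ) := by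
      intro i
      have hpc : (a i : ℝ) * (c i : ℝ) = ∏ j, (a j : ℝ) := by
        exact_mod_cast congrArg (fun z : ℤ => (z : ℝ)) (hPi i)
      rw [← hpc]
      field_simp [haR i]
      push_cast
      ring
    have hr : ((∑ i, (u i - v i) * c i : ℤ) : ℝ)
        = (∑ i, ((u i : ℝ) / a i - (v i : ℝ) / a i)) * ∏ j, (a j : ℝ) := by
      rw [Finset.sum_mul]
      push_cast
      refine Finset.sum_congr rfl fun i _ => ?_
      have := hterm i
      push_cast at this
      exact this
    rw [Finset.sum_sub_distrib, h, sub_self, zero_mul] at hr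
    exact_mod_cast hr
  have hdvd : ∀ i, a i ∣ (u i - v i) := by
    intro i
    have h3 : a i ∣ (u i - v i) * c i := by
      have hsplit : (u i - v i) * c i
          = (∑ j, (u j - v j) * c j) - ∑ j ∈ Finset.univ.erase i, (u j - v j) * c j := by
        rw [← Finset.add_sum_erase Finset.univ (fun j => (u j - v j) * c j) (Finset.mem_univ i)]
        ring
      rw [hsplit, key, zero_sub]
      refine (Finset.dvd_sum fun j hj => ?_).neg_right
      have hji : j ≠ i := (Finset.mem_erase.1 hj).1
      exact Dvd.dvd.mul_left (Finset.dvd_prod_of_mem a (by simp [hji.symm])) _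
    have hcopi : IsCoprime (a i) (c i) := by
      refine IsCoprime.prod_right fun j hj => ?_
      have hji : j ≠ i := (Finset.mem_erase.1 hj).1
      rw [Int.isCoprime_iff_gcd_eq_one]
      rcases lt_or_gt_of_ne (Ne.symm hji) with hlt | hlt
      · exact hcop i j hlt
      · rw [Int.gcd_comm]; exact hcop j i hlt
    exact hcopi.dvd_of_dvd_mul_right h3
  have htri : ∀ i, u i = v i ∨ (u i = a i ∧ v i = 0) ∨ (u i = 0 ∧ v i = a i) := by
    intro i
    obtain ⟨k, hk⟩ := hdvd i
    have h1 := (hu1 i).1; have h2 := (hu1 i).2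
    have h3 := (hv1 i).1; have h4 := (hv1 i).2
    have hai := ha i
    have hk1 : k ≤ 1 := by nlinarith
    have hk2 : -1 ≤ k := by nlinarith
    interval_cases k <;> omega
  set d : Fin n → ℤ := fun i => if u i = v i then 0 else if u i = a i then 1 else -1 with hd
  have hdval : ∀ i, d i = 0 ∨ d i = 1 ∨ d i = -1 := by
    intro i; simp only [hd]; split_ifs <;> simp
  have htermd : ∀ i, (u i - v i) * c i = d i * ∏ j, a j := by
    intro i
    rcases htri i with h1 | ⟨h1, h2⟩ | ⟨h1, h2⟩
    · simp [hd, h1]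
    · have hne : u i ≠ v i := by have := ha i; omega
      have hdi : d i = 1 := by simp only [hd, if_neg hne, if_pos h1]
      rw [hdi, one_mul, ← hPi i, h1, h2]; ring
    · have hne : u i ≠ v i := by have := ha i; omega
      have hne2 : u i ≠ a i := by have := ha i; omega
      have hdi : d i = -1 := by simp only [hd, if_neg hne, if_neg hne2]
      rw [hdi, ← hPi i, h1, h2]; ring
  have hsumd : ∑ i, d i = 0 := by
    have hz : (∑ i, d i) * ∏ j, a j = 0 := by
      rw [← key, Finset.sum_mul]
      exact (Finset.sum_congr rfl fun i _ => (htermd i)).symm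
    have hP : (∏ j, a j) ≠ 0 := Finset.prod_ne_zero_iff.2 fun j _ => (ha j).ne'
    exact (mul_eq_zero.1 hz).resolve_right hP
  by_contra hne
  have : ∃ i, u i ≠ v i := by
    by_contra hall
    push_neg at hall
    exact hne (funext hall)
  obtain ⟨i0, hi0⟩ := this
  have hd0ne : d i0 ≠ 0 := by
    simp only [hd, if_neg hi0]; split_ifs <;> simp
  have hneg : (∃ i, d i = 1) → ∃ j, d j = -1 := by
    rintro ⟨i, hi⟩
    by_contra hnone
    push_neg at hnone
    have hpos : ∀ j ∈ Finset.univ, (0:ℤ) ≤ d j := by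
      intro j _
      rcases hdval j with h1 | h1 | h1
      · omega
      · omega
      · exact absurd h1 (hnone j)
    have hle := Finset.single_le_sum hpos (Finset.mem_univ i)
    omega
  have hpos' : (∃ j, d j = -1) → ∃ i, d i = 1 := by
    rintro ⟨j, hj⟩
    by_contra hnone
    push_neg at hnone
    have hnegall : ∀ k ∈ Finset.univ, (0:ℤ) ≤ -d k := by
      intro k _
      rcases hdval k with h1 | h1 | h1
      · omega
      · exact absurd h1 (hnone k)
      · omega
    have hle := Finset.single_le_sum hnegall (Finset.mem_univ j)
    have hs2 : ∑ x : Fin n, -d x = 0 := by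
      rw [Finset.sum_neg_distrib, hsumd, neg_zero]
    omega
  have hpair : (∃ i, d i = 1) ∧ (∃ j, d j = -1) := by
    rcases hdval i0 with h1 | h1 | h1
    · exact absurd h1 hd0ne
    · exact ⟨⟨i0, h1⟩, hneg ⟨i0, h1⟩⟩
    · exact ⟨hpos' ⟨i0, h1⟩, ⟨i0, h1⟩⟩
  obtain ⟨⟨i, hi⟩, ⟨j, hj⟩⟩ := hpair
  have hiu : u i = a i ∧ v i = 0 := by
    rcases htri i with h1 | h1 | ⟨h1, h2⟩
    · simp [hd, h1] at hi
    · exact h1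
    · have hne1 : u i ≠ a i := by have := ha i; omega
      have hne2 : u i ≠ v i := by have := ha i; omega
      have hdi : d i = -1 := by simp only [hd, if_neg hne2, if_neg hne1]
      omega
  have hju : u j = 0 ∧ v j = a j := by
    rcases htri j with h1 | ⟨h1, h2⟩ | h1
    · simp [hd, h1] at hj
    · have hne2 : u j ≠ v j := by have := ha j; omega
      have hdj : d j = 1 := by simp only [hd, if_neg hne2, if_pos h1]
      omega
    · exact h1
  have hij : i ≠ j := by
    intro hEq; rw [hEq] at hiu; have := ha j; omega
  rcases lt_or_gt_of_ne hij with hlt | hlt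
  · exact hv2 ⟨i, j, hlt, hiu.2, hju.2⟩
  · exact hu2 ⟨j, i, hlt, hju.1, hiu.1⟩
end

section
/- Let n ≥ 1 and let a_1,…,a_n be pairwise coprime positive integers. Then {Σ_{i=1}^{n} u_i/a_i : u ∈ B'} = {Σ_{i=1}^{n} u_i/a_i : u ∈ ℤ^n, 0 ≤ u_i ≤ a_i for all i}; that is, for every u ∈ ℤ^n with 0 ≤ u_i ≤ a_i for all i there exists v ∈ B' with Σ_{i=1}^{n} v_i/a_i = Σ_{i=1}^{n} u_i/a_i. -/
open Finset

lemma key18 (n : ℕ) (a : Fin n → ℤ) (ha : ∀ i, 0 < a i) :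
    ∀ m (u : Fin n → ℤ), (∑ j ∈ univ.filter (fun j => u j = a j), (j : ℕ)) = m →
      (∀ i, 0 ≤ u i ∧ u i ≤ a i) →
      ∃ v ∈ setB' n a, ∑ i, (v i : ℝ) / (a i : ℝ) = ∑ i, (u i : ℝ) / (a i : ℝ) := by
  intro m
  induction m using Nat.strong_induction_on with
  | _ m ih =>
    intro u hm hu
    by_cases hbad : ∃ i j : Fin n, i < j ∧ u i = 0 ∧ u j = a j
    · obtain ⟨i, j, hij, hi0, hja⟩ := hbad
      have hne : i ≠ j := ne_of_lt hij
      set v : Fin n → ℤ := Function.update (Function.update u i (a i)) j 0 with hv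
      have hvi : v i = a i := by
        simp [hv, Function.update_apply, hne]
      have hvj : v j = 0 := by simp [hv]
      have hvk : ∀ k, k ≠ i → k ≠ j → v k = u k := by
        intro k hki hkj
        simp [hv, Function.update_apply, hki, hkj]
      have hvb : ∀ k, 0 ≤ v k ∧ v k ≤ a k := by
        intro k
        rcases eq_or_ne k i with rfl | hki
        · rw [hvi]; exact ⟨(ha k).le, le_refl _⟩
        rcases eq_or_ne k j with rfl | hkj
        · rw [hvj]; exact ⟨le_refl _, (ha k).le⟩
        · rw [hvk k hki hkj]; exact hu k
      -- measure decreases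
      have hia : u i ≠ a i := by rw [hi0]; exact (ha i).ne
      have hja' : v j ≠ a j := by rw [hvj]; exact (ha j).ne
      have hset : univ.filter (fun k => v k = a k)
          = insert i ((univ.filter (fun k => u k = a k)).erase j) := by
        ext k
        simp only [mem_filter, mem_univ, true_and, mem_insert, mem_erase]
        constructor
        · intro hk
          rcases eq_or_ne k i with rfl | hki
          · exact Or.inl rfl
          rcases eq_or_ne k j with rfl | hkj
          · exact absurd hk hja'
          · exact Or.inr ⟨hkj, by rwa [hvk k hki hkj] at hk⟩
        · rintro (rfl | ⟨hkj, hk⟩)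
          · exact hvi
          rcases eq_or_ne k i with rfl | hki
          · exact absurd hk hia
          · rwa [hvk k hki hkj]
      have hinot : i ∉ (univ.filter (fun k => u k = a k)).erase j := by
        simp [hia]
      have hjin : j ∈ univ.filter (fun k => u k = a k) := by simp [hja]
      have hmv : (∑ k ∈ univ.filter (fun k => v k = a k), (k : ℕ)) < m := by
        rw [hset, Finset.sum_insert hinot]
        have h2 : (∑ k ∈ (univ.filter (fun k => u k = a k)).erase j, (k : ℕ)) + (j : ℕ)
            = m := by
          rw [← hm, Finset.sum_erase_add _ _ hjin]
        omega
      obtain ⟨w, hw, hws⟩ := ih _ hmv v rfl hvb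
      refine ⟨w, hw, ?_⟩
      rw [hws]
      -- sum of v equals sum of u
      have hai : (a i : ℝ) ≠ 0 := by exact_mod_cast (ha i).ne'
      have haj : (a j : ℝ) ≠ 0 := by exact_mod_cast (ha j).ne'
      have hji : j ∈ (univ : Finset (Fin n)).erase i := by simp [hne.symm]
      rw [← Finset.sum_erase_add _ _ (mem_univ i), ← Finset.sum_erase_add _ _ hji,
        ← Finset.sum_erase_add (ι := Fin n) _ (fun k => (u k : ℝ) / a k) (mem_univ i),
        ← Finset.sum_erase_add _ _ hji]
      have heq : ∀ k ∈ (univ.erase i).erase j, (v k : ℝ) / a k = (u k : ℝ) / a k := by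
        intro k hk
        simp only [mem_erase] at hk
        rw [hvk k hk.2.1 hk.1]
      rw [Finset.sum_congr rfl heq, hvi, hvj, hi0, hja]
      push_cast
      field_simp
      ring
    · exact ⟨u, ⟨hu, hbad⟩, rfl⟩

theorem stmt18 (n : ℕ) (hn : 1 ≤ n) (a : Fin n → ℤ) (ha : ∀ i, 0 < a i)
    (hcop : ∀ i j : Fin n, i < j → Int.gcd (a i) (a j) = 1) :
    (fun u : Fin n → ℤ => ∑ i, (u i : ℝ) / (a i : ℝ)) '' setB' n a =
      (fun u : Fin n → ℤ => ∑ i, (u i : ℝ) / (a i : ℝ)) ''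
        {u | ∀ i, 0 ≤ u i ∧ u i ≤ a i} := by
  apply Set.Subset.antisymm
  · exact Set.image_mono (fun u hu => hu.1)
  · rintro x ⟨u, hu, rfl⟩
    obtain ⟨v, hv, hsum⟩ := key18 n a ha _ u rfl hu
    exact ⟨v, hv, hsum⟩
end
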